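/- For every integer t ≥ 1, the number of partitions of the rectangle R(2,3t+1) into 2t L-trominoes and exactly one vertical domino equals (t+1)·2^t. -/

import Mathlib

abbrev Cell : Type := ℤ × ℤ

/-- The m×n rectangle of cells (i,j), 1 ≤ i ≤ m (row), 1 ≤ j ≤ n (column). -/
def rect (m n : ℤ) : Set Cell :=
  {c : Cell | 1 ≤ c.1 ∧ c.1 ≤ m ∧ 1 ≤ c.2 ∧ c.2 ≤ n}

/-- An L-tromino: a 2×2 block minus one of its cells. -/
def IsTromino (T : Set Cell) : Prop :=
  ∃ i j : ℤ, ∃ c : Cell,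
    c ∈ ({(i, j), (i + 1, j), (i, j + 1), (i + 1, j + 1)} : Set Cell) ∧
    T = ({(i, j), (i + 1, j), (i, j + 1), (i + 1, j + 1)} : Set Cell) \ {c}

def IsHDomino (D : Set Cell) : Prop := ∃ i j : ℤ, D = {(i, j), (i, j + 1)}

def IsVDomino (D : Set Cell) : Prop := ∃ i j : ℤ, D = {(i, j), (i + 1, j)}

def IsDomino (D : Set Cell) : Prop := IsHDomino D ∨ IsVDomino D

/-- A partition of `S` into L-trominoes, identified with its set of pieces. -/
def IsTromTiling (P : Set (Set Cell)) (S : Set Cell) : Prop :=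
  (∀ p ∈ P, IsTromino p) ∧ P.PairwiseDisjoint id ∧ ⋃₀ P = S

def Tileable (S : Set Cell) : Prop := ∃ P, IsTromTiling P S

/-- A partition of `S` into dominoes, identified with its set of pieces. -/
def IsDominoTiling (P : Set (Set Cell)) (S : Set Cell) : Prop :=
  (∀ p ∈ P, IsDomino p) ∧ P.PairwiseDisjoint id ∧ ⋃₀ P = S

/-- A partition of `S` into `k` L-trominoes and exactly one piece satisfying `dom`. -/
def IsMixedTiling (P : Set (Set Cell)) (S : Set Cell)
    (dom : Set Cell → Prop) (k : ℕ) : Prop :=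
  P.PairwiseDisjoint id ∧ ⋃₀ P = S ∧
  (∀ p ∈ P, IsTromino p ∨ dom p) ∧
  {p ∈ P | dom p}.ncard = 1 ∧ {p ∈ P | IsTromino p}.ncard = k


namespace VDD

def strip (a n : ℤ) : Set Cell :=
  {c : Cell | 1 ≤ c.1 ∧ c.1 ≤ 2 ∧ a + 1 ≤ c.2 ∧ c.2 ≤ a + n}

@[simp] lemma mem_strip {x : Cell} {a n : ℤ} :
    x ∈ strip a n ↔ 1 ≤ x.1 ∧ x.1 ≤ 2 ∧ a + 1 ≤ x.2 ∧ x.2 ≤ a + n := Iff.rfl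

def SA (j : ℤ) : Set Cell := {(1, j), (2, j), (1, j + 1)}
def SB (j : ℤ) : Set Cell := {(1, j), (2, j), (2, j + 1)}
def SC (j : ℤ) : Set Cell := {(1, j), (1, j + 1), (2, j + 1)}
def SD (j : ℤ) : Set Cell := {(2, j), (1, j + 1), (2, j + 1)}
def VD (j : ℤ) : Set Cell := {(1, j), (2, j)}

lemma trom_SA (j : ℤ) : IsTromino (SA j) := by
  refine ⟨1, j, (2, j + 1), by simp, ?_⟩
  ext ⟨x, y⟩; simp [SA, Prod.ext_iff]; try omega

lemma trom_SB (j : ℤ) : IsTromino (SB j) := by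
  refine ⟨1, j, (1, j + 1), by simp, ?_⟩
  ext ⟨x, y⟩; simp [SB, Prod.ext_iff]; try omega

lemma trom_SC (j : ℤ) : IsTromino (SC j) := by
  refine ⟨1, j, (2, j), by simp, ?_⟩
  ext ⟨x, y⟩; simp [SC, Prod.ext_iff]; try omega

lemma trom_SD (j : ℤ) : IsTromino (SD j) := by
  refine ⟨1, j, (1, j), by simp, ?_⟩
  ext ⟨x, y⟩; simp [SD, Prod.ext_iff]; try omega

lemma vdom_VD (j : ℤ) : IsVDomino (VD j) := ⟨1, j, rfl⟩

lemma not_vdom_of_trom {T : Set Cell} (hT : IsTromino T) : ¬ IsVDomino T := by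
  rintro ⟨i, j, rfl⟩
  obtain ⟨i', j', c, hc, hT⟩ := hT
  have hx : ∀ x : Cell,
      x ∈ ({(i', j'), (i' + 1, j'), (i', j' + 1), (i' + 1, j' + 1)} : Set Cell) →
      x ≠ c → x.2 = j := by
    intro x hxb hxc
    have hmem : x ∈ ({(i', j'), (i' + 1, j'), (i', j' + 1), (i' + 1, j' + 1)} : Set Cell) \ {c} :=
      ⟨hxb, hxc⟩
    rw [← hT] at hmem
    rcases hmem with h | h <;> simp_all
  have hL : j' = j := by
    rcases eq_or_ne c (i', j') with h | h
    · have := hx (i' + 1, j') (by simp) (by subst h; simp [Prod.ext_iff])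
      simpa using this
    · simpa using hx (i', j') (by simp) h.symm
  have hR : j' + 1 = j := by
    rcases eq_or_ne c (i', j' + 1) with h | h
    · have := hx (i' + 1, j' + 1) (by simp) (by subst h; simp [Prod.ext_iff])
      simpa using this
    · simpa using hx (i', j' + 1) (by simp) h.symm
  omega

lemma tromino_in_strip {T : Set Cell} {a n : ℤ} (hT : IsTromino T) (hsub : T ⊆ strip a n) :
    ∃ j, a + 1 ≤ j ∧ j + 1 ≤ a + n ∧ (T = SA j ∨ T = SB j ∨ T = SC j ∨ T = SD j) := by
  obtain ⟨i, j, c, hc, hTe⟩ := hT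
  simp only [Set.mem_insert_iff, Set.mem_singleton_iff] at hc
  rcases hc with rfl | rfl | rfl | rfl
  · have hTe' : T = {((i+1 : ℤ), j), (i, j+1), (i+1, j+1)} := by
      rw [hTe]; ext ⟨x, y⟩; simp [Prod.ext_iff]; try omega
    have h1 := hsub (show ((i : ℤ), j+1) ∈ T by rw [hTe']; simp)
    have h2 := hsub (show ((i+1 : ℤ), j) ∈ T by rw [hTe']; simp)
    simp at h1 h2
    refine ⟨j, by omega, by omega, Or.inr (Or.inr (Or.inr ?_))⟩
    rw [hTe']; ext ⟨x, y⟩; simp [SD, Prod.ext_iff]; try omega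
  · have hTe' : T = {((i : ℤ), j), (i, j+1), (i+1, j+1)} := by
      rw [hTe]; ext ⟨x, y⟩; simp [Prod.ext_iff]; try omega
    have h1 := hsub (show ((i : ℤ), j) ∈ T by rw [hTe']; simp)
    have h2 := hsub (show ((i+1 : ℤ), j+1) ∈ T by rw [hTe']; simp)
    simp at h1 h2
    refine ⟨j, by omega, by omega, Or.inr (Or.inr (Or.inl ?_))⟩
    rw [hTe']; ext ⟨x, y⟩; simp [SC, Prod.ext_iff]; try omega
  · have hTe' : T = {((i : ℤ), j), (i+1, j), (i+1, j+1)} := by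
      rw [hTe]; ext ⟨x, y⟩; simp [Prod.ext_iff]; try omega
    have h1 := hsub (show ((i : ℤ), j) ∈ T by rw [hTe']; simp)
    have h2 := hsub (show ((i+1 : ℤ), j+1) ∈ T by rw [hTe']; simp)
    simp at h1 h2
    refine ⟨j, by omega, by omega, Or.inr (Or.inl ?_)⟩
    rw [hTe']; ext ⟨x, y⟩; simp [SB, Prod.ext_iff]; try omega
  · have hTe' : T = {((i : ℤ), j), (i+1, j), (i, j+1)} := by
      rw [hTe]; ext ⟨x, y⟩; simp [Prod.ext_iff]; try omega
    have h1 := hsub (show ((i : ℤ), j+1) ∈ T by rw [hTe']; simp)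
    have h2 := hsub (show ((i+1 : ℤ), j) ∈ T by rw [hTe']; simp)
    simp at h1 h2
    refine ⟨j, by omega, by omega, Or.inl ?_⟩
    rw [hTe']; ext ⟨x, y⟩; simp [SA, Prod.ext_iff]; try omega

lemma vdom_in_strip {D : Set Cell} {a n : ℤ} (hD : IsVDomino D) (hsub : D ⊆ strip a n) :
    ∃ j, a + 1 ≤ j ∧ j ≤ a + n ∧ D = VD j := by
  obtain ⟨i, j, rfl⟩ := hD
  have h1 := hsub (show ((i : ℤ), j) ∈ _ by simp)
  have h2 := hsub (show ((i+1 : ℤ), j) ∈ _ by simp)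
  simp at h1 h2
  refine ⟨j, by omega, by omega, ?_⟩
  ext ⟨x, y⟩; simp [VD, Prod.ext_iff]; try omega

lemma same_piece {P : Set (Set Cell)} (hdisj : P.PairwiseDisjoint id) {p q : Set Cell}
    (hp : p ∈ P) (hq : q ∈ P) {x : Cell} (hxp : x ∈ p) (hxq : x ∈ q) : p = q :=
  hdisj.elim hp hq fun hd => absurd hxq (Set.disjoint_left.mp hd hxp)

lemma covered {P : Set (Set Cell)} {a n : ℤ} (hU : ⋃₀ P = strip a n) {x : Cell}
    (hx : x ∈ strip a n) : ∃ p ∈ P, x ∈ p := by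
  rw [← hU] at hx; exact hx

lemma peel {P : Set (Set Cell)} {a n : ℤ} (hn : 3 ≤ n)
    (hdisj : P.PairwiseDisjoint id) (hU : ⋃₀ P = strip a n)
    (hpieces : ∀ p ∈ P, IsTromino p ∨ IsVDomino p) :
    VD (a + 1) ∈ P ∨
      (SB (a + 1) ∈ P ∧ SC (a + 2) ∈ P) ∨ (SA (a + 1) ∈ P ∧ SD (a + 2) ∈ P) := by
  have hsub : ∀ p ∈ P, p ⊆ strip a n := fun p hp => hU ▸ Set.subset_sUnion_of_mem hp
  obtain ⟨T, hTP, hxT⟩ := covered hU (x := (1, a + 1)) (by simp; try omega)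
  rcases hpieces T hTP with hTt | hTd
  swap
  · -- vertical domino at the first column
    obtain ⟨j, hj1, hj2, rfl⟩ := vdom_in_strip hTd (hsub _ hTP)
    have hj : j = a + 1 := by
      simp [VD, Prod.mk.injEq] at hxT; try omega
    subst hj; exact Or.inl hTP
  obtain ⟨j, hj1, hj2, hshape⟩ := tromino_in_strip hTt (hsub _ hTP)
  rcases hshape with rfl | rfl | rfl | rfl
  · -- T = SA j, necessarily j = a+1 : L1-true case
    have hj : j = a + 1 := by
      simp [SA, Prod.mk.injEq] at hxT; try omega
    subst hj
    -- look at the piece covering (2, a+2)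
    obtain ⟨p, hpP, hxp⟩ := covered hU (x := (2, a + 2)) (by simp; try omega)
    rcases hpieces p hpP with hpt | hpd
    swap
    · obtain ⟨j', hj1', hj2', rfl⟩ := vdom_in_strip hpd (hsub _ hpP)
      have hj' : j' = a + 2 := by
        simp [VD, Prod.mk.injEq] at hxp; try omega
      subst hj'
      have hpe := same_piece hdisj hpP hTP (x := (1, a + 2))
        (by simp [VD, Prod.mk.injEq]; try omega)
        (by simp [SA, Prod.mk.injEq]; try omega)
      rw [hpe] at hxp
      simp [SA, Prod.mk.injEq] at hxp; try omega
    obtain ⟨j', hj1', hj2', hs⟩ := tromino_in_strip hpt (hsub _ hpP)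
    rcases hs with rfl | rfl | rfl | rfl
    · -- p = SA j' with (2,a+2) ∈ p : j' = a+2, shares (1,a+2) with T
      have hj' : j' = a + 2 := by
        simp [SA, Prod.mk.injEq] at hxp; try omega
      subst hj'
      have hpe := same_piece hdisj hpP hTP (x := (1, a + 2))
        (by simp [SA, Prod.mk.injEq]; try omega)
        (by simp [SA, Prod.mk.injEq]; try omega)
      rw [hpe] at hxp
      simp [SA, Prod.mk.injEq] at hxp; try omega
    · -- p = SB j' : j' = a+2 (shares (1,a+2)) or j' = a+1 (shares (1,a+1))
      have hj' : j' = a + 2 ∨ j' = a + 1 := by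
        simp [SB, Prod.mk.injEq] at hxp; try omega
      rcases hj' with rfl | rfl
      · have hpe := same_piece hdisj hpP hTP (x := (1, a + 2))
          (by simp [SB, Prod.mk.injEq]; try omega)
          (by simp [SA, Prod.mk.injEq]; try omega)
        rw [hpe] at hxp
        simp [SA, Prod.mk.injEq] at hxp; try omega
      · have hpe := same_piece hdisj hpP hTP (x := (1, a + 1))
          (by simp [SB, Prod.mk.injEq]; try omega)
          (by simp [SA, Prod.mk.injEq]; try omega)
        rw [hpe] at hxp
        simp [SA, Prod.mk.injEq] at hxp; try omega
    · -- p = SC j' : j' = a+1, shares (1,a+1)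
      have hj' : j' = a + 1 := by
        simp [SC, Prod.mk.injEq] at hxp; try omega
      subst hj'
      have hpe := same_piece hdisj hpP hTP (x := (1, a + 1))
        (by simp [SC, Prod.mk.injEq]; try omega)
        (by simp [SA, Prod.mk.injEq]; try omega)
      rw [hpe] at hxp
      simp [SA, Prod.mk.injEq] at hxp; try omega
    · -- p = SD j' : j' = a+2 (success) or j' = a+1 (shares (2,a+1))
      have hj' : j' = a + 2 ∨ j' = a + 1 := by
        simp [SD, Prod.mk.injEq] at hxp; try omega
      rcases hj' with rfl | rfl
      · exact Or.inr (Or.inr ⟨hTP, hpP⟩)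
      · have hpe := same_piece hdisj hpP hTP (x := (2, a + 1))
          (by simp [SD, Prod.mk.injEq]; try omega)
          (by simp [SA, Prod.mk.injEq]; try omega)
        rw [hpe] at hxp
        simp [SA, Prod.mk.injEq] at hxp; try omega
  · -- T = SB j, j = a+1 : L1-false case
    have hj : j = a + 1 := by
      simp [SB, Prod.mk.injEq] at hxT; try omega
    subst hj
    -- look at the piece covering (1, a+2)
    obtain ⟨p, hpP, hxp⟩ := covered hU (x := (1, a + 2)) (by simp; try omega)
    rcases hpieces p hpP with hpt | hpd
    swap
    · obtain ⟨j', hj1', hj2', rfl⟩ := vdom_in_strip hpd (hsub _ hpP)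
      have hj' : j' = a + 2 := by
        simp [VD, Prod.mk.injEq] at hxp; try omega
      subst hj'
      have hpe := same_piece hdisj hpP hTP (x := (2, a + 2))
        (by simp [VD, Prod.mk.injEq]; try omega)
        (by simp [SB, Prod.mk.injEq]; try omega)
      rw [hpe] at hxp
      simp [SB, Prod.mk.injEq] at hxp; try omega
    obtain ⟨j', hj1', hj2', hs⟩ := tromino_in_strip hpt (hsub _ hpP)
    rcases hs with rfl | rfl | rfl | rfl
    · -- p = SA j' : j' = a+2 (shares (2,a+2)) or j' = a+1 (shares (1,a+1))
      have hj' : j' = a + 2 ∨ j' = a + 1 := by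
        simp [SA, Prod.mk.injEq] at hxp; try omega
      rcases hj' with rfl | rfl
      · have hpe := same_piece hdisj hpP hTP (x := (2, a + 2))
          (by simp [SA, Prod.mk.injEq]; try omega)
          (by simp [SB, Prod.mk.injEq]; try omega)
        rw [hpe] at hxp
        simp [SB, Prod.mk.injEq] at hxp; try omega
      · have hpe := same_piece hdisj hpP hTP (x := (1, a + 1))
          (by simp [SA, Prod.mk.injEq]; try omega)
          (by simp [SB, Prod.mk.injEq]; try omega)
        rw [hpe] at hxp
        simp [SB, Prod.mk.injEq] at hxp; try omega
    · -- p = SB j' : j' = a+2, shares (2,a+2)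
      have hj' : j' = a + 2 := by
        simp [SB, Prod.mk.injEq] at hxp; try omega
      subst hj'
      have hpe := same_piece hdisj hpP hTP (x := (2, a + 2))
        (by simp [SB, Prod.mk.injEq]; try omega)
        (by simp [SB, Prod.mk.injEq]; try omega)
      rw [hpe] at hxp
      simp [SB, Prod.mk.injEq] at hxp; try omega
    · -- p = SC j' : j' = a+2 (success) or j' = a+1 (shares (1,a+1))
      have hj' : j' = a + 2 ∨ j' = a + 1 := by
        simp [SC, Prod.mk.injEq] at hxp; try omega
      rcases hj' with rfl | rfl
      · exact Or.inr (Or.inl ⟨hTP, hpP⟩)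
      · have hpe := same_piece hdisj hpP hTP (x := (1, a + 1))
          (by simp [SC, Prod.mk.injEq]; try omega)
          (by simp [SB, Prod.mk.injEq]; try omega)
        rw [hpe] at hxp
        simp [SB, Prod.mk.injEq] at hxp; try omega
    · -- p = SD j' : j' = a+1, shares (2,a+1)
      have hj' : j' = a + 1 := by
        simp [SD, Prod.mk.injEq] at hxp; try omega
      subst hj'
      have hpe := same_piece hdisj hpP hTP (x := (2, a + 1))
        (by simp [SD, Prod.mk.injEq]; try omega)
        (by simp [SB, Prod.mk.injEq]; try omega)
      rw [hpe] at hxp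
      simp [SB, Prod.mk.injEq] at hxp; try omega
  · -- T = SC j, j = a+1 : the impossible case, (2,a+1) cannot be covered
    have hj : j = a + 1 := by
      simp [SC, Prod.mk.injEq] at hxT; try omega
    subst hj
    exfalso
    obtain ⟨p, hpP, hxp⟩ := covered hU (x := (2, a + 1)) (by simp; try omega)
    rcases hpieces p hpP with hpt | hpd
    swap
    · obtain ⟨j', hj1', hj2', rfl⟩ := vdom_in_strip hpd (hsub _ hpP)
      have hj' : j' = a + 1 := by
        simp [VD, Prod.mk.injEq] at hxp; try omega
      subst hj'
      have hpe := same_piece hdisj hpP hTP (x := (1, a + 1))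
        (by simp [VD, Prod.mk.injEq]; try omega)
        (by simp [SC, Prod.mk.injEq]; try omega)
      rw [hpe] at hxp
      simp [SC, Prod.mk.injEq] at hxp; try omega
    obtain ⟨j', hj1', hj2', hs⟩ := tromino_in_strip hpt (hsub _ hpP)
    rcases hs with rfl | rfl | rfl | rfl
    · -- p = SA j' : j' = a+1, shares (1,a+1)
      have hj' : j' = a + 1 := by
        simp [SA, Prod.mk.injEq] at hxp; try omega
      subst hj'
      have hpe := same_piece hdisj hpP hTP (x := (1, a + 1))
        (by simp [SA, Prod.mk.injEq]; try omega)
        (by simp [SC, Prod.mk.injEq]; try omega)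
      rw [hpe] at hxp
      simp [SC, Prod.mk.injEq] at hxp; try omega
    · -- p = SB j' : j' = a+1 (shares (1,a+1)) or j' = a (out of strip)
      have hj' : j' = a + 1 ∨ j' = a := by
        simp [SB, Prod.mk.injEq] at hxp; try omega
      rcases hj' with rfl | rfl
      · have hpe := same_piece hdisj hpP hTP (x := (1, a + 1))
          (by simp [SB, Prod.mk.injEq]; try omega)
          (by simp [SC, Prod.mk.injEq]; try omega)
        rw [hpe] at hxp
        simp [SC, Prod.mk.injEq] at hxp; try omega
      · omega
    · -- p = SC j' : j' = a, out of strip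
      have hj' : j' = a := by
        simp [SC, Prod.mk.injEq] at hxp; try omega
      omega
    · -- p = SD j' : j' = a+1 (shares (1,a+2)) or j' = a (out of strip)
      have hj' : j' = a + 1 ∨ j' = a := by
        simp [SD, Prod.mk.injEq] at hxp; try omega
      rcases hj' with rfl | rfl
      · have hpe := same_piece hdisj hpP hTP (x := (1, a + 2))
          (by simp [SD, Prod.mk.injEq]; try omega)
          (by simp [SC, Prod.mk.injEq]; try omega)
        rw [hpe] at hxp
        simp [SC, Prod.mk.injEq] at hxp; try omega
      · omega
  · -- T = SD j : impossible, (1,a+1) not in SD j for admissible j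
    exfalso
    simp [SD, Prod.mk.injEq] at hxT; try omega


def L1 (a : ℤ) : Bool → Set Cell
  | true => SA (a + 1)
  | false => SB (a + 1)

def L2 (a : ℤ) : Bool → Set Cell
  | true => SD (a + 2)
  | false => SC (a + 2)

lemma trom_L1 (a : ℤ) (b : Bool) : IsTromino (L1 a b) := by
  cases b
  · exact trom_SB _
  · exact trom_SA _

lemma trom_L2 (a : ℤ) (b : Bool) : IsTromino (L2 a b) := by
  cases b
  · exact trom_SC _
  · exact trom_SD _

lemma mem_L1_1 (a : ℤ) (b : Bool) : ((1 : ℤ), a + 1) ∈ L1 a b := by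
  cases b <;> simp [L1, SA, SB]

lemma mem_L2_3 (a : ℤ) (b : Bool) : ((2 : ℤ), a + 3) ∈ L2 a b := by
  cases b <;> (simp [L2, SC, SD, Prod.ext_iff]; try omega)

lemma not_mem_L2_1 (a : ℤ) (b : Bool) : ((1 : ℤ), a + 1) ∉ L2 a b := by
  cases b <;> (simp [L2, SC, SD, Prod.ext_iff]; try omega)

lemma L1_ne_L2 (a : ℤ) (b b' : Bool) : L1 a b ≠ L2 a b' :=
  fun h => not_mem_L2_1 a b' (h ▸ mem_L1_1 a b)

lemma L1_cross (a : ℤ) : L1 a true ≠ L1 a false := by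
  intro h
  have h1 : ((1 : ℤ), a + 2) ∈ L1 a true := by
    simp [L1, SA, Prod.ext_iff]; try omega
  rw [h] at h1
  simp [L1, SB, Prod.ext_iff] at h1; try omega

lemma sUnion_diff_pair {P : Set (Set Cell)} (hdisj : P.PairwiseDisjoint id) {p q : Set Cell}
    (hp : p ∈ P) (hq : q ∈ P) : ⋃₀ (P \ {p, q}) = (⋃₀ P) \ (p ∪ q) := by
  ext x
  constructor
  · rintro ⟨r, ⟨hrP, hr⟩, hxr⟩
    simp only [Set.mem_insert_iff, Set.mem_singleton_iff] at hr
    push_neg at hr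
    refine ⟨⟨r, hrP, hxr⟩, ?_⟩
    rintro (hxp | hxq)
    · exact hr.1 (same_piece hdisj hrP hp hxr hxp)
    · exact hr.2 (same_piece hdisj hrP hq hxr hxq)
  · rintro ⟨⟨r, hrP, hxr⟩, hnx⟩
    refine ⟨r, ⟨hrP, ?_⟩, hxr⟩
    simp only [Set.mem_insert_iff, Set.mem_singleton_iff]
    push_neg
    constructor
    · rintro rfl; exact hnx (Or.inl hxr)
    · rintro rfl; exact hnx (Or.inr hxr)

lemma sUnion_diff_one {P : Set (Set Cell)} (hdisj : P.PairwiseDisjoint id) {p : Set Cell}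
    (hp : p ∈ P) : ⋃₀ (P \ {p}) = (⋃₀ P) \ p := by
  ext x
  constructor
  · rintro ⟨r, ⟨hrP, hr⟩, hxr⟩
    simp only [Set.mem_singleton_iff] at hr
    exact ⟨⟨r, hrP, hxr⟩, fun hxp => hr (same_piece hdisj hrP hp hxr hxp)⟩
  · rintro ⟨⟨r, hrP, hxr⟩, hnx⟩
    exact ⟨r, ⟨hrP, fun h => hnx (h ▸ hxr)⟩, hxr⟩

lemma strip_diff_L {a n : ℤ} (b : Bool) :
    strip a n \ (L1 a b ∪ L2 a b) = strip (a + 3) (n - 3) := by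
  cases b <;> (ext ⟨x, y⟩; simp [L1, L2, SA, SB, SC, SD, Prod.ext_iff]; try omega)

lemma strip_diff_V {a n : ℤ} : strip a n \ VD (a + 1) = strip (a + 1) (n - 1) := by
  ext ⟨x, y⟩; simp [VD, Prod.ext_iff]; try omega

lemma union_L {a m : ℤ} (b : Bool) (hm : 0 ≤ m) :
    L1 a b ∪ (L2 a b ∪ strip (a + 3) m) = strip a (m + 3) := by
  cases b <;> (ext ⟨x, y⟩; simp [L1, L2, SA, SB, SC, SD, Prod.ext_iff]; try omega)

lemma union_V {a m : ℤ} (hm : 0 ≤ m) :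
    VD (a + 1) ∪ strip (a + 1) m = strip a (m + 1) := by
  ext ⟨x, y⟩; simp [VD, Prod.ext_iff]; try omega

lemma strip_finite (a n : ℤ) : (strip a n).Finite := by
  apply Set.Finite.subset (Set.finite_Icc ((1 : ℤ), a + 1) (2, a + n))
  rintro ⟨x, y⟩ hx
  simp only [mem_strip] at hx
  simp [Prod.le_def]; try omega

lemma tiling_finite {P : Set (Set Cell)} {a n : ℤ} (hU : ⋃₀ P = strip a n) : P.Finite := by
  apply Set.Finite.subset (Set.Finite.finite_subsets (strip_finite a n))
  intro p hp
  simp only [Set.mem_setOf_eq]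
  rw [← hU]
  exact Set.subset_sUnion_of_mem hp

lemma disjoint_strip_strip {a b n m : ℤ} (h : a + n ≤ b) :
    Disjoint (strip a n) (strip b m) := by
  rw [Set.disjoint_left]
  rintro ⟨x, y⟩ h1 h2
  simp at h1 h2; omega

lemma L1_sub (a : ℤ) (b : Bool) : L1 a b ⊆ strip a 3 := by
  cases b <;> (rintro ⟨x, y⟩ h; simp [L1, SA, SB, Prod.ext_iff] at h; simp; omega)

lemma L2_sub (a : ℤ) (b : Bool) : L2 a b ⊆ strip a 3 := by
  cases b <;> (rintro ⟨x, y⟩ h; simp [L2, SC, SD, Prod.ext_iff] at h; simp; omega)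

lemma VD_sub (a : ℤ) : VD (a + 1) ⊆ strip a 1 := by
  rintro ⟨x, y⟩ h; simp [VD, Prod.ext_iff] at h; simp; omega

lemma disj_L12 (a : ℤ) (b : Bool) : Disjoint (L1 a b) (L2 a b) := by
  cases b <;>
    (rw [Set.disjoint_left]; rintro ⟨x, y⟩ h1 h2;
     simp [L1, L2, SA, SB, SC, SD, Prod.ext_iff] at h1 h2; omega)

lemma not_mem_far {Q : Set (Set Cell)} {b m : ℤ} (hQ : ⋃₀ Q = strip b m) {s : Set Cell}
    {x : Cell} (hx : x ∈ s) (hx' : x ∉ strip b m) : s ∉ Q :=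
  fun h => hx' (hQ ▸ Set.subset_sUnion_of_mem h hx)

lemma insert_insert_diff_pair {α : Type*} {P : Set α} {p q : α} (hp : p ∈ P) (hq : q ∈ P) :
    insert p (insert q (P \ {p, q})) = P := by
  ext x
  simp only [Set.mem_insert_iff, Set.mem_diff, Set.mem_singleton_iff]
  constructor
  · rintro (rfl | rfl | ⟨h, _⟩) <;> assumption
  · intro h
    by_cases h1 : x = p
    · tauto
    · by_cases h2 : x = q <;> tauto

lemma peel' {P : Set (Set Cell)} {a n : ℤ} (hn : 3 ≤ n)
    (hdisj : P.PairwiseDisjoint id) (hU : ⋃₀ P = strip a n)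
    (hpieces : ∀ p ∈ P, IsTromino p ∨ IsVDomino p) :
    VD (a + 1) ∈ P ∨ ∃ b, L1 a b ∈ P ∧ L2 a b ∈ P := by
  rcases peel hn hdisj hU hpieces with h | ⟨h1, h2⟩ | ⟨h1, h2⟩
  · exact Or.inl h
  · exact Or.inr ⟨false, h1, h2⟩
  · exact Or.inr ⟨true, h1, h2⟩

lemma finite_tilings {a n : ℤ} (pred : Set (Set Cell) → Prop)
    (h : ∀ P, pred P → ⋃₀ P = strip a n) : Finite {P : Set (Set Cell) // pred P} := by
  have h2 : {P : Set (Set Cell) | pred P}.Finite := by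
    apply Set.Finite.subset (Set.Finite.finite_subsets
      (Set.Finite.finite_subsets (strip_finite a n)))
    intro P hP
    simp only [Set.mem_setOf_eq]
    intro s hs
    simp only [Set.mem_setOf_eq]
    rw [← h P hP]
    exact Set.subset_sUnion_of_mem hs
  exact h2.to_subtype

lemma addBlock_disj {a m : ℤ} {b : Bool} {Q : Set (Set Cell)}
    (hQd : Q.PairwiseDisjoint id) (hQU : ⋃₀ Q = strip (a + 3) m) :
    (insert (L1 a b) (insert (L2 a b) Q)).PairwiseDisjoint id := by
  have hq : ∀ q ∈ Q, q ⊆ strip (a + 3) m := fun q hq => hQU ▸ Set.subset_sUnion_of_mem hq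
  have hdisjL : ∀ s ⊆ strip a 3, ∀ q ∈ Q, Disjoint s q := by
    intro s hs q hqQ
    exact ((disjoint_strip_strip (by omega)).mono hs (hq q hqQ))
  apply Set.PairwiseDisjoint.insert
  · apply Set.PairwiseDisjoint.insert hQd
    intro q hqQ _
    exact hdisjL _ (L2_sub a b) q hqQ
  · intro q hqmem _
    rcases hqmem with rfl | hqQ
    · exact disj_L12 a b
    · exact hdisjL _ (L1_sub a b) q hqQ

lemma addBlock_union {a m : ℤ} {b : Bool} {Q : Set (Set Cell)} (hm : 0 ≤ m)
    (hQU : ⋃₀ Q = strip (a + 3) m) :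
    ⋃₀ (insert (L1 a b) (insert (L2 a b) Q)) = strip a (m + 3) := by
  rw [Set.sUnion_insert, Set.sUnion_insert, hQU, union_L b hm]

lemma tromtiling_ncard : ∀ (k : ℕ), ∀ (a : ℤ), ∀ Q : Set (Set Cell),
    IsTromTiling Q (strip a (3 * (k : ℤ))) → Q.ncard = 2 * k := by
  intro k
  induction k with
  | zero =>
    intro a Q ⟨hQt, hQd, hQU⟩
    have hQe : Q = ∅ := by
      rw [Set.eq_empty_iff_forall_notMem]
      intro p hp
      obtain ⟨j, hj1, hj2, _⟩ := tromino_in_strip (hQt p hp)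
        (hQU ▸ Set.subset_sUnion_of_mem hp)
      simp at hj1 hj2; omega
    simp [hQe]
  | succ k ih =>
    intro a Q hQ
    obtain ⟨hQt, hQd, hQU⟩ := hQ
    have hcast : (3 * ((k + 1 : ℕ) : ℤ)) = 3 * (k : ℤ) + 3 := by push_cast; ring
    rw [hcast] at hQU
    rcases peel' (by omega) hQd hQU (fun p hp => Or.inl (hQt p hp)) with hVD | ⟨b, h1, h2⟩
    · exact absurd (vdom_VD _) (not_vdom_of_trom (hQt _ hVD))
    have hQ'U : ⋃₀ (Q \ {L1 a b, L2 a b}) = strip (a + 3) (3 * (k : ℤ)) := by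
      rw [sUnion_diff_pair hQd h1 h2, hQU, strip_diff_L]
      first
            | rfl
            | (congr 1; try ring)
    have hQ'card : (Q \ {L1 a b, L2 a b}).ncard = 2 * k :=
      ih (a + 3) _ ⟨fun p hp => hQt p hp.1, hQd.subset Set.diff_subset, hQ'U⟩
    have hfin : Q.Finite := tiling_finite hQU
    have hL1 : L1 a b ∉ Q \ {L1 a b, L2 a b} := by simp
    have hL2 : L2 a b ∉ Q \ {L1 a b, L2 a b} := by simp
    have hne : L1 a b ∉ insert (L2 a b) (Q \ {L1 a b, L2 a b}) := by
      simp only [Set.mem_insert_iff]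
      push_neg
      exact ⟨L1_ne_L2 a b b, hL1⟩
    calc Q.ncard = (insert (L1 a b) (insert (L2 a b) (Q \ {L1 a b, L2 a b}))).ncard := by
          rw [insert_insert_diff_pair h1 h2]
      _ = (insert (L2 a b) (Q \ {L1 a b, L2 a b})).ncard + 1 := by
          rw [Set.ncard_insert_of_notMem hne ((hfin.diff).insert _)]
      _ = (Q \ {L1 a b, L2 a b}).ncard + 2 := by
          rw [Set.ncard_insert_of_notMem hL2 (hfin.diff)]
      _ = 2 * (k + 1) := by omega

lemma card_trom : ∀ (k : ℕ), ∀ (a : ℤ),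
    Nat.card {Q : Set (Set Cell) // IsTromTiling Q (strip a (3 * (k : ℤ)))} = 2 ^ k := by
  intro k
  induction k with
  | zero =>
    intro a
    rw [pow_zero, Nat.card_eq_one_iff_unique]
    constructor
    · constructor
      rintro ⟨P, hPt, hPd, hPU⟩ ⟨P', hPt', hPd', hPU'⟩
      have he : ∀ R : Set (Set Cell), (∀ p ∈ R, IsTromino p) →
          ⋃₀ R = strip a (3 * ((0 : ℕ) : ℤ)) → R = ∅ := by
        intro R hRt hRU
        rw [Set.eq_empty_iff_forall_notMem]
        intro p hp
        obtain ⟨j, hj1, hj2, _⟩ := tromino_in_strip (hRt p hp)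
          (hRU ▸ Set.subset_sUnion_of_mem hp)
        simp at hj1 hj2; omega
      refine Subtype.ext (?_ : P = P')
      rw [he P hPt hPU, he P' hPt' hPU']
    · refine ⟨⟨∅, by simp, Set.pairwiseDisjoint_empty, ?_⟩⟩
      rw [Set.sUnion_empty]
      ext ⟨x, y⟩; simp
  | succ k ih =>
    intro a
    have hcast : (3 * ((k + 1 : ℕ) : ℤ)) = 3 * (k : ℤ) + 3 := by push_cast; ring
    rw [hcast]
    set F : Bool × {Q : Set (Set Cell) // IsTromTiling Q (strip (a + 3) (3 * (k : ℤ)))} →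
        {P : Set (Set Cell) // IsTromTiling P (strip a (3 * (k : ℤ) + 3))} := fun x =>
      ⟨insert (L1 a x.1) (insert (L2 a x.1) x.2.val), by
        obtain ⟨hQt, hQd, hQU⟩ := x.2.prop
        refine ⟨?_, addBlock_disj hQd hQU, ?_⟩
        · intro p hp
          rcases hp with rfl | rfl | hp
          · exact trom_L1 a x.1
          · exact trom_L2 a x.1
          · exact hQt p hp
        · rw [addBlock_union (by positivity) hQU]⟩ with hF
    have hbij : Function.Bijective F := by
      constructor
      · rintro ⟨b, Q, hQ⟩ ⟨b', Q', hQ'⟩ h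
        simp only [hF, Subtype.mk.injEq] at h
        have hL1Q : ∀ (b₀ : Bool) (R : Set (Set Cell)),
            IsTromTiling R (strip (a + 3) (3 * (k : ℤ))) → L1 a b₀ ∉ R := fun b₀ R hR =>
          not_mem_far hR.2.2 (mem_L1_1 a b₀) (by simp; try omega)
        have hL2Q : ∀ (b₀ : Bool) (R : Set (Set Cell)),
            IsTromTiling R (strip (a + 3) (3 * (k : ℤ))) → L2 a b₀ ∉ R := fun b₀ R hR =>
          not_mem_far hR.2.2 (mem_L2_3 a b₀) (by simp; try omega)
        have hb : b = b' := by
          cases b <;> cases b' <;> try rfl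
          · exfalso
            have hm : L1 a true ∈ insert (L1 a false) (insert (L2 a false) Q) := by
              rw [h]; simp
            rcases hm with hx | hx | hx
            · exact L1_cross a hx
            · exact L1_ne_L2 a true false hx
            · exact hL1Q true Q hQ hx
          · exfalso
            have hm : L1 a true ∈ insert (L1 a false) (insert (L2 a false) Q') := by
              rw [← h]; simp
            rcases hm with hx | hx | hx
            · exact L1_cross a hx
            · exact L1_ne_L2 a true false hx
            · exact hL1Q true Q' hQ' hx
        subst hb
        have hQQ : Q = Q' := by
          ext p
          constructor
          · intro hp
            have : p ∈ insert (L1 a b) (insert (L2 a b) Q') := by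
              rw [← h]; simp [hp]
            rcases this with rfl | rfl | hp'
            · exact absurd hp (hL1Q b Q hQ)
            · exact absurd hp (hL2Q b Q hQ)
            · exact hp'
          · intro hp
            have : p ∈ insert (L1 a b) (insert (L2 a b) Q) := by
              rw [h]; simp [hp]
            rcases this with rfl | rfl | hp'
            · exact absurd hp (hL1Q b Q' hQ')
            · exact absurd hp (hL2Q b Q' hQ')
            · exact hp'
        exact Prod.ext rfl (Subtype.ext hQQ)
      · rintro ⟨P, hPt, hPd, hPU⟩
        rcases peel' (by omega) hPd hPU (fun p hp => Or.inl (hPt p hp)) with hVD | ⟨b, h1, h2⟩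
        · exact absurd (vdom_VD _) (not_vdom_of_trom (hPt _ hVD))
        refine ⟨(b, ⟨P \ {L1 a b, L2 a b}, fun p hp => hPt p hp.1,
          hPd.subset Set.diff_subset, ?_⟩), ?_⟩
        · rw [sUnion_diff_pair hPd h1 h2, hPU, strip_diff_L]
          first
            | rfl
            | (congr 1; try ring)
        · exact Subtype.ext (insert_insert_diff_pair h1 h2)
    haveI : Finite {Q : Set (Set Cell) // IsTromTiling Q (strip (a + 3) (3 * (k : ℤ)))} :=
      finite_tilings _ (fun P hP => hP.2.2)
    rw [← Nat.card_eq_of_bijective F hbij, Nat.card_prod, ih, Nat.card_eq_fintype_card,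
      Fintype.card_bool, pow_succ]
    ring

lemma not_trom_VD (j : ℤ) : ¬ IsTromino (VD j) := fun h => not_vdom_of_trom h (vdom_VD j)

lemma strip_one (a : ℤ) : strip a 1 = VD (a + 1) := by
  ext ⟨x, y⟩; simp [VD, Prod.ext_iff]; try omega

lemma card_mixed : ∀ (t : ℕ), ∀ (a : ℤ),
    Nat.card {P : Set (Set Cell) //
      IsMixedTiling P (strip a (3 * (t : ℤ) + 1)) IsVDomino (2 * t)} = (t + 1) * 2 ^ t := by
  intro t
  induction t with
  | zero =>
    intro a
    have hcast : (3 * ((0 : ℕ) : ℤ) + 1) = 1 := by norm_num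
    rw [hcast]
    have huniq : ∀ P : Set (Set Cell),
        IsMixedTiling P (strip a 1) IsVDomino (2 * 0) → P = {VD (a + 1)} := by
      rintro P ⟨hPd, hPU, hPp, hPv, hPt⟩
      obtain ⟨D, hD⟩ := Set.ncard_eq_one.mp hPv
      have hDm : D ∈ {p ∈ P | IsVDomino p} := by rw [hD]; rfl
      obtain ⟨hDP, hDv⟩ := hDm
      have hDVD : D = VD (a + 1) := by
        obtain ⟨j, hj1, hj2, rfl⟩ := vdom_in_strip hDv (hPU ▸ Set.subset_sUnion_of_mem hDP)
        have : j = a + 1 := by omega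
        rw [this]
      ext p
      constructor
      · intro hp
        rcases hPp p hp with ht | hv
        · obtain ⟨j, hj1, hj2, _⟩ := tromino_in_strip ht (hPU ▸ Set.subset_sUnion_of_mem hp)
          omega
        · have : p ∈ {p ∈ P | IsVDomino p} := ⟨hp, hv⟩
          rw [hD] at this
          simp only [Set.mem_singleton_iff] at this ⊢
          rw [this, hDVD]
      · intro hp
        simp only [Set.mem_singleton_iff] at hp
        rw [hp, ← hDVD]
        exact hDP
    rw [show ((0 : ℕ) + 1) * 2 ^ (0 : ℕ) = 1 by norm_num, Nat.card_eq_one_iff_unique]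
    constructor
    · constructor
      rintro ⟨P, hP⟩ ⟨P', hP'⟩
      simp only [Subtype.mk.injEq]
      rw [huniq P hP, huniq P' hP']
    · refine ⟨⟨{VD (a + 1)}, Set.pairwiseDisjoint_singleton _ _, ?_, ?_, ?_, ?_⟩⟩
      · rw [Set.sUnion_singleton, strip_one]
      · rintro p hp
        simp only [Set.mem_singleton_iff] at hp
        exact Or.inr (hp ▸ vdom_VD (a + 1))
      · have : {p ∈ ({VD (a + 1)} : Set (Set Cell)) | IsVDomino p} = {VD (a + 1)} := by
          ext p
          simp only [Set.mem_setOf_eq, Set.mem_sep_iff, Set.mem_singleton_iff]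
          exact ⟨fun h => h.1, fun h => ⟨h, h ▸ vdom_VD _⟩⟩
        rw [this, Set.ncard_singleton]
      · have : {p ∈ ({VD (a + 1)} : Set (Set Cell)) | IsTromino p} = ∅ := by
          ext p
          simp only [Set.mem_setOf_eq, Set.mem_sep_iff, Set.mem_singleton_iff,
            Set.mem_empty_iff_false, iff_false, not_and]
          rintro rfl
          exact not_trom_VD _
        rw [this]
        simp
  | succ t ih =>
    intro a
    have hcast : (3 * ((t + 1 : ℕ) : ℤ) + 1) = 3 * (t : ℤ) + 4 := by push_cast; ring
    rw [hcast]
    -- source types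
    set X := {Q : Set (Set Cell) // IsTromTiling Q (strip (a + 1) (3 * (t : ℤ) + 3))} with hX
    set Y := {Q : Set (Set Cell) //
      IsMixedTiling Q (strip (a + 3) (3 * (t : ℤ) + 1)) IsVDomino (2 * t)} with hY
    set Z := {P : Set (Set Cell) //
      IsMixedTiling P (strip a (3 * (t : ℤ) + 4)) IsVDomino (2 * (t + 1))} with hZ
    have hQtrom_ncard : ∀ Q : Set (Set Cell),
        IsTromTiling Q (strip (a + 1) (3 * (t : ℤ) + 3)) → Q.ncard = 2 * (t + 1) := by
      intro Q hQ
      have h3 : (3 : ℤ) * ((t + 1 : ℕ) : ℤ) = 3 * (t : ℤ) + 3 := by push_cast; ring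
      exact tromtiling_ncard (t + 1) (a + 1) Q (by rw [h3]; exact hQ)
    set G : X ⊕ (Bool × Y) → Z := fun x =>
      match x with
      | Sum.inl ⟨Q, hQ⟩ => ⟨insert (VD (a + 1)) Q, by
          obtain ⟨hQt, hQd, hQU⟩ := hQ
          have hq : ∀ q ∈ Q, q ⊆ strip (a + 1) (3 * (t : ℤ) + 3) :=
            fun q hq => hQU ▸ Set.subset_sUnion_of_mem hq
          refine ⟨?_, ?_, ?_, ?_, ?_⟩
          · apply Set.PairwiseDisjoint.insert hQd
            intro q hqQ _
            exact (disjoint_strip_strip (by omega)).mono (VD_sub a) (hq q hqQ)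
          · rw [Set.sUnion_insert, hQU, union_V (by omega)]
            first
            | rfl
            | (congr 1; try ring)
          · rintro p hp
            rcases hp with rfl | hp
            · exact Or.inr (vdom_VD _)
            · exact Or.inl (hQt p hp)
          · have : {p ∈ insert (VD (a + 1)) Q | IsVDomino p} = {VD (a + 1)} := by
              ext p
              simp only [Set.mem_setOf_eq, Set.mem_sep_iff, Set.mem_insert_iff, Set.mem_singleton_iff]
              constructor
              · rintro ⟨rfl | hp, hv⟩
                · rfl
                · exact absurd hv (not_vdom_of_trom (hQt p hp))
              · rintro rfl
                exact ⟨Or.inl rfl, vdom_VD _⟩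
            rw [this, Set.ncard_singleton]
          · have : {p ∈ insert (VD (a + 1)) Q | IsTromino p} = Q := by
              ext p
              simp only [Set.mem_setOf_eq, Set.mem_sep_iff, Set.mem_insert_iff]
              constructor
              · rintro ⟨rfl | hp, ht⟩
                · exact absurd ht (not_trom_VD _)
                · exact hp
              · intro hp
                exact ⟨Or.inr hp, hQt p hp⟩
            rw [this, hQtrom_ncard Q ⟨hQt, hQd, hQU⟩]⟩
      | Sum.inr ⟨b, Q, hQ⟩ => ⟨insert (L1 a b) (insert (L2 a b) Q), by
          obtain ⟨hQd, hQU, hQp, hQv, hQt⟩ := hQ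
          have hQfin : Q.Finite := tiling_finite hQU
          refine ⟨addBlock_disj hQd hQU, ?_, ?_, ?_, ?_⟩
          · rw [addBlock_union (by omega) hQU]
            first
            | rfl
            | (congr 1; try ring)
          · rintro p hp
            rcases hp with rfl | rfl | hp
            · exact Or.inl (trom_L1 a b)
            · exact Or.inl (trom_L2 a b)
            · exact hQp p hp
          · have : {p ∈ insert (L1 a b) (insert (L2 a b) Q) | IsVDomino p}
                = {p ∈ Q | IsVDomino p} := by
              ext p
              simp only [Set.mem_setOf_eq, Set.mem_sep_iff, Set.mem_insert_iff]
              constructor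
              · rintro ⟨rfl | rfl | hp, hv⟩
                · exact absurd hv (not_vdom_of_trom (trom_L1 a b))
                · exact absurd hv (not_vdom_of_trom (trom_L2 a b))
                · exact ⟨hp, hv⟩
              · rintro ⟨hp, hv⟩
                exact ⟨Or.inr (Or.inr hp), hv⟩
            rw [this, hQv]
          · have hsep : {p ∈ insert (L1 a b) (insert (L2 a b) Q) | IsTromino p}
                = insert (L1 a b) (insert (L2 a b) {p ∈ Q | IsTromino p}) := by
              ext p
              simp only [Set.mem_setOf_eq, Set.mem_sep_iff, Set.mem_insert_iff]
              constructor
              · rintro ⟨rfl | rfl | hp, ht⟩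
                · exact Or.inl rfl
                · exact Or.inr (Or.inl rfl)
                · exact Or.inr (Or.inr ⟨hp, ht⟩)
              · rintro (rfl | rfl | ⟨hp, ht⟩)
                · exact ⟨Or.inl rfl, trom_L1 a b⟩
                · exact ⟨Or.inr (Or.inl rfl), trom_L2 a b⟩
                · exact ⟨Or.inr (Or.inr hp), ht⟩
            have hL1Q : L1 a b ∉ Q := not_mem_far hQU (mem_L1_1 a b) (by simp; try omega)
            have hL2Q : L2 a b ∉ Q := not_mem_far hQU (mem_L2_3 a b) (by simp; try omega)
            have hfin : {p ∈ Q | IsTromino p}.Finite := hQfin.subset (Set.sep_subset _ _)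
            have h1 : L1 a b ∉ insert (L2 a b) {p ∈ Q | IsTromino p} := by
              simp only [Set.mem_insert_iff]
              push_neg
              exact ⟨L1_ne_L2 a b b, fun h => hL1Q h.1⟩
            have h2 : L2 a b ∉ {p ∈ Q | IsTromino p} := fun h => hL2Q h.1
            rw [hsep, Set.ncard_insert_of_notMem h1 (hfin.insert _),
              Set.ncard_insert_of_notMem h2 hfin, hQt]
            ring⟩
      with hG
    have hbij : Function.Bijective G := by
      have hVD_far : ∀ (R : Set (Set Cell)), ⋃₀ R = strip (a + 3) (3 * (t : ℤ) + 1) →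
          VD (a + 1) ∉ R := fun R hR =>
        not_mem_far hR (show ((1 : ℤ), a + 1) ∈ VD (a + 1) by simp [VD]) (by simp; try omega)
      have hL1_far : ∀ (b : Bool) (R : Set (Set Cell)),
          ⋃₀ R = strip (a + 3) (3 * (t : ℤ) + 1) → L1 a b ∉ R := fun b R hR =>
        not_mem_far hR (mem_L1_1 a b) (by simp; try omega)
      have hL2_far : ∀ (b : Bool) (R : Set (Set Cell)),
          ⋃₀ R = strip (a + 3) (3 * (t : ℤ) + 1) → L2 a b ∉ R := fun b R hR =>
        not_mem_far hR (mem_L2_3 a b) (by simp; try omega)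
      have hVD_far' : ∀ (R : Set (Set Cell)), ⋃₀ R = strip (a + 1) (3 * (t : ℤ) + 3) →
          VD (a + 1) ∉ R := fun R hR =>
        not_mem_far hR (show ((1 : ℤ), a + 1) ∈ VD (a + 1) by simp [VD]) (by simp; try omega)
      constructor
      · have hVD_ne_L1 : ∀ b, VD (a + 1) ≠ L1 a b := fun b h =>
          not_trom_VD (a + 1) (by rw [h]; exact trom_L1 a b)
        have hVD_ne_L2 : ∀ b, VD (a + 1) ≠ L2 a b := fun b h =>
          not_trom_VD (a + 1) (by rw [h]; exact trom_L2 a b)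
        have hmix : ∀ (b : Bool) (Q Q' : Set (Set Cell)),
            ⋃₀ Q' = strip (a + 3) (3 * (t : ℤ) + 1) →
            insert (VD (a + 1)) Q ≠ insert (L1 a b) (insert (L2 a b) Q') := by
          intro b Q Q' hQ' h
          have : VD (a + 1) ∈ insert (L1 a b) (insert (L2 a b) Q') := by rw [← h]; simp
          rcases this with hx | hx | hx
          · exact hVD_ne_L1 b hx
          · exact hVD_ne_L2 b hx
          · exact hVD_far Q' hQ' hx
        rintro (⟨Q, hQ⟩ | ⟨b, Q, hQ⟩) (⟨Q', hQ'⟩ | ⟨b', Q', hQ'⟩) h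
        · replace h : insert (VD (a + 1)) Q = insert (VD (a + 1)) Q' :=
            congrArg Subtype.val h
          have hQQ : Q = Q' := by
            ext p
            constructor
            · intro hp
              have : p ∈ insert (VD (a + 1)) Q' := by rw [← h]; simp [hp]
              rcases this with rfl | hp'
              · exact absurd hp (hVD_far' Q hQ.2.2)
              · exact hp'
            · intro hp
              have : p ∈ insert (VD (a + 1)) Q := by rw [h]; simp [hp]
              rcases this with rfl | hp'
              · exact absurd hp (hVD_far' Q' hQ'.2.2)
              · exact hp'
          exact congrArg Sum.inl (Subtype.ext hQQ)
        · exact absurd (show insert (VD (a + 1)) Q = insert (L1 a b') (insert (L2 a b') Q')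
            from congrArg Subtype.val h) (hmix b' Q Q' hQ'.2.1)
        · exact absurd (show insert (VD (a + 1)) Q' = insert (L1 a b) (insert (L2 a b) Q)
            from (congrArg Subtype.val h).symm) (hmix b Q' Q hQ.2.1)
        · replace h : insert (L1 a b) (insert (L2 a b) Q)
              = insert (L1 a b') (insert (L2 a b') Q') := congrArg Subtype.val h
          have hb : b = b' := by
            cases b <;> cases b' <;> try rfl
            · exfalso
              have hm : L1 a true ∈ insert (L1 a false) (insert (L2 a false) Q) := by
                rw [h]; simp
              rcases hm with hx | hx | hx
              · exact L1_cross a hx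
              · exact L1_ne_L2 a true false hx
              · exact hL1_far true Q hQ.2.1 hx
            · exfalso
              have hm : L1 a true ∈ insert (L1 a false) (insert (L2 a false) Q') := by
                rw [← h]; simp
              rcases hm with hx | hx | hx
              · exact L1_cross a hx
              · exact L1_ne_L2 a true false hx
              · exact hL1_far true Q' hQ'.2.1 hx
          subst hb
          have hQQ : Q = Q' := by
            ext p
            constructor
            · intro hp
              have : p ∈ insert (L1 a b) (insert (L2 a b) Q') := by rw [← h]; simp [hp]
              rcases this with rfl | rfl | hp'
              · exact absurd hp (hL1_far b Q hQ.2.1)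
              · exact absurd hp (hL2_far b Q hQ.2.1)
              · exact hp'
            · intro hp
              have : p ∈ insert (L1 a b) (insert (L2 a b) Q) := by rw [h]; simp [hp]
              rcases this with rfl | rfl | hp'
              · exact absurd hp (hL1_far b Q' hQ'.2.1)
              · exact absurd hp (hL2_far b Q' hQ'.2.1)
              · exact hp'
          exact congrArg Sum.inr (Prod.ext rfl (Subtype.ext hQQ))
      · rintro ⟨P, hPd, hPU, hPp, hPv, hPt⟩
        by_cases hVD : VD (a + 1) ∈ P
        · have hvset : {p ∈ P | IsVDomino p} = {VD (a + 1)} := by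
            obtain ⟨D, hD⟩ := Set.ncard_eq_one.mp hPv
            have hVDm : VD (a + 1) ∈ {p ∈ P | IsVDomino p} := ⟨hVD, vdom_VD _⟩
            rw [hD] at hVDm ⊢
            simp only [Set.mem_singleton_iff] at hVDm
            rw [hVDm]
          have hQ : IsTromTiling (P \ {VD (a + 1)}) (strip (a + 1) (3 * (t : ℤ) + 3)) := by
            refine ⟨?_, hPd.subset Set.diff_subset, ?_⟩
            · rintro p ⟨hp, hpne⟩
              rcases hPp p hp with ht | hv
              · exact ht
              · exfalso
                have : p ∈ {p ∈ P | IsVDomino p} := ⟨hp, hv⟩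
                rw [hvset] at this
                exact hpne this
            · rw [sUnion_diff_one hPd hVD, hPU, strip_diff_V]
              first
            | rfl
            | (congr 1; try ring)
          refine ⟨Sum.inl ⟨P \ {VD (a + 1)}, hQ⟩, ?_⟩
          apply Subtype.ext
          show insert (VD (a + 1)) (P \ {VD (a + 1)}) = P
          rw [Set.insert_diff_singleton, Set.insert_eq_self.mpr hVD]
        · rcases peel' (by omega) hPd hPU hPp with h | ⟨b, h1, h2⟩
          · exact absurd h hVD
          have hQ : IsMixedTiling (P \ {L1 a b, L2 a b}) (strip (a + 3) (3 * (t : ℤ) + 1))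
              IsVDomino (2 * t) := by
            refine ⟨hPd.subset Set.diff_subset, ?_, fun p hp => hPp p hp.1, ?_, ?_⟩
            · rw [sUnion_diff_pair hPd h1 h2, hPU, strip_diff_L]
              first
            | rfl
            | (congr 1; try ring)
            · have hsame : {p ∈ P \ {L1 a b, L2 a b} | IsVDomino p}
                  = {p ∈ P | IsVDomino p} := by
                ext p
                simp only [Set.mem_setOf_eq, Set.mem_sep_iff, Set.mem_diff, Set.mem_insert_iff,
                  Set.mem_singleton_iff]
                constructor
                · rintro ⟨⟨hp, _⟩, hv⟩; exact ⟨hp, hv⟩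
                · rintro ⟨hp, hv⟩
                  refine ⟨⟨hp, ?_⟩, hv⟩
                  push_neg
                  constructor
                  · rintro rfl; exact not_vdom_of_trom (trom_L1 a b) hv
                  · rintro rfl; exact not_vdom_of_trom (trom_L2 a b) hv
              rw [hsame, hPv]
            · have hsept : {p ∈ P \ {L1 a b, L2 a b} | IsTromino p}
                  = {p ∈ P | IsTromino p} \ {L1 a b, L2 a b} := by
                ext p
                simp only [Set.mem_setOf_eq, Set.mem_sep_iff, Set.mem_diff]
                tauto
              have hsub2 : ({L1 a b, L2 a b} : Set (Set Cell)) ⊆ {p ∈ P | IsTromino p} := by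
                rintro p (rfl | rfl)
                · exact ⟨h1, trom_L1 a b⟩
                · exact ⟨h2, trom_L2 a b⟩
              have hfin : {p ∈ P | IsTromino p}.Finite :=
                (tiling_finite hPU).subset (Set.sep_subset _ _)
              rw [hsept, Set.ncard_diff hsub2, hPt,
                Set.ncard_pair (L1_ne_L2 a b b)]
              omega
          refine ⟨Sum.inr (b, ⟨P \ {L1 a b, L2 a b}, hQ⟩), ?_⟩
          apply Subtype.ext
          show insert (L1 a b) (insert (L2 a b) (P \ {L1 a b, L2 a b})) = P
          exact insert_insert_diff_pair h1 h2
    haveI : Finite X := finite_tilings _ (fun P hP => hP.2.2)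
    haveI : Finite Y := finite_tilings _ (fun P hP => hP.2.1)
    have hc1 : Nat.card X = 2 ^ (t + 1) := by
      rw [hX, show (3 * (t : ℤ) + 3) = 3 * ((t + 1 : ℕ) : ℤ) by push_cast; ring]
      exact card_trom (t + 1) (a + 1)
    rw [← Nat.card_eq_of_bijective G hbij, Nat.card_sum, Nat.card_prod,
      Nat.card_eq_fintype_card (α := Bool), Fintype.card_bool, ih, hc1, pow_succ]
    ring

end VDD

/-- The number of partitions of R(2,3t+1) into 2t L-trominoes and one vertical domino. -/
theorem count_vertical_domino_deficient (t : ℕ) (ht : 1 ≤ t) :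
    Nat.card {P : Set (Set Cell) //
      IsMixedTiling P (rect 2 (3 * (t : ℤ) + 1)) IsVDomino (2 * t)} = (t + 1) * 2 ^ t := by
  have hrect : rect 2 (3 * (t : ℤ) + 1) = VDD.strip 0 (3 * (t : ℤ) + 1) := by
    ext ⟨x, y⟩; simp [rect, VDD.strip]; try omega
  rw [hrect]
  exact VDD.card_mixed t 0
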